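/- arXiv:1007.0797 — 3 statements merged into one kernel-verified Lean document; each statement's English description precedes it below -/
import Mathlib

section
/- Let G be a finite vertex-transitive graph and A an independent set with |A|·|V(G)| = α(G)·|N[A]|. Then for every maximum independent set S of G, |S ∩ N[A]| = |A|; in particular, A ⊆ S for some maximum independent set S. -/
open Finset SimpleGraph

variable {α β : Type*}

/-- The direct (tensor) product of two simple graphs. -/
def tensorProd (G : SimpleGraph α) (H : SimpleGraph β) : SimpleGraph (α × β) where
  Adj x y := G.Adj x.1 y.1 ∧ H.Adj x.2 y.2
  symm := ⟨fun _ _ h => ⟨h.1.symm, h.2.symm⟩⟩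
  loopless := ⟨fun x h => G.irrefl h.1⟩

/-- A set of vertices is independent iff it is a clique in the complement. -/
def IsIndepSet (G : SimpleGraph α) (s : Set α) : Prop := Gᶜ.IsClique s

/-- The independence number: the clique number of the complement. -/
noncomputable def indepNum (G : SimpleGraph α) : ℕ := Gᶜ.cliqueNum

/-- A graph is vertex-transitive if its automorphism group acts transitively. -/
def VertexTransitive (G : SimpleGraph α) : Prop := ∀ u v : α, ∃ φ : G ≃g G, φ u = v

/-- The closed neighborhood of a set of vertices. -/
def closedNbhd (G : SimpleGraph α) (A : Set α) : Set α :=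
  A ∪ {b | ∃ a ∈ A, G.Adj a b}

section Aux

variable [Fintype α] {G : SimpleGraph α}

private lemma indep_coe_card_le {s : Finset α} (hs : _root_.IsIndepSet G (s : Set α)) :
    s.card ≤ _root_.indepNum G :=
  IsClique.card_le_cliqueNum (tc := hs)

private lemma indepSet_union_sdiff {S A : Set α} (hS : _root_.IsIndepSet G S) (hA : _root_.IsIndepSet G A) :
    _root_.IsIndepSet G ((S \ closedNbhd G A) ∪ A) := by
  intro x hx y hy hxy
  rw [compl_adj]
  refine ⟨hxy, fun hadj => ?_⟩
  rcases hx with hx | hx <;> rcases hy with hy | hy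
  · exact (hS hx.1 hy.1 hxy).2 hadj
  · exact hx.2 (Or.inr ⟨y, hy, hadj.symm⟩)
  · exact hy.2 (Or.inr ⟨x, hx, hadj⟩)
  · exact (hA hx hy hxy).2 hadj

private lemma ncard_inter_ge {A : Set α} (hA : _root_.IsIndepSet G A)
    (S : Set α) (hS : _root_.IsIndepSet G S) (hcard : S.ncard = _root_.indepNum G) :
    A.ncard ≤ (S ∩ closedNbhd G A).ncard := by
  set N := closedNbhd G A with hNdef
  have hT : _root_.IsIndepSet G ((S \ N) ∪ A) := indepSet_union_sdiff hS hA
  have hfin : ((S \ N) ∪ A).Finite := Set.toFinite _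
  have hTle : ((S \ N) ∪ A).ncard ≤ _root_.indepNum G := by
    rw [Set.ncard_eq_toFinset_card _ hfin]
    exact indep_coe_card_le (by rwa [Set.Finite.coe_toFinset])
  have hdisj : Disjoint (S \ N) A :=
    Set.disjoint_left.mpr fun x hx hxA => hx.2 (Or.inl hxA)
  have hU : ((S \ N) ∪ A).ncard = (S \ N).ncard + A.ncard :=
    Set.ncard_union_eq hdisj (Set.toFinite _) (Set.toFinite _)
  have hsplit : (S ∩ N).ncard + (S \ N).ncard = S.ncard :=
    Set.ncard_inter_add_ncard_diff_eq_ncard S N (Set.toFinite _)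
  omega

end Aux

theorem stmt3 [Fintype α] (G : SimpleGraph α) (hG : VertexTransitive G)
    (A : Set α) (hA : _root_.IsIndepSet G A)
    (heq : A.ncard * Fintype.card α = _root_.indepNum G * (closedNbhd G A).ncard) :
    (∀ S : Set α, _root_.IsIndepSet G S → S.ncard = _root_.indepNum G →
      (S ∩ closedNbhd G A).ncard = A.ncard) ∧
    ∃ S : Set α, _root_.IsIndepSet G S ∧ S.ncard = _root_.indepNum G ∧ A ⊆ S := by
  classical
  have part1 : ∀ S : Set α, _root_.IsIndepSet G S → S.ncard = _root_.indepNum G →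
      (S ∩ closedNbhd G A).ncard = A.ncard := by
    rcases A.eq_empty_or_nonempty with rfl | ⟨a₀, ha₀⟩
    · intro S hS hcard
      have hNe : closedNbhd G ∅ = ∅ := by
        simp [closedNbhd]
      simp [hNe]
    · intro S hS hScard
      haveI : Fintype (G ≃g G) :=
        Fintype.ofInjective (fun φ : G ≃g G => φ.toEquiv) RelIso.toEquiv_injective
      set N := closedNbhd G A with hNdef
      have hfA : A.Finite := Set.toFinite _
      have hfN : N.Finite := Set.toFinite _
      have hfS : S.Finite := Set.toFinite _
      set Af := hfA.toFinset with hAfdef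
      set Xf := hfN.toFinset with hXfdef
      set Sf := hfS.toFinset with hSfdef
      set k : α → α → ℕ :=
        fun s v => (univ.filter (fun φ : G ≃g G => φ s = v)).card with hkdef
      -- the fiber cardinality is constant
      have kconst : ∀ s v s' v', k s v = k s' v' := by
        intro s v s' v'
        obtain ⟨χ, hχ⟩ := hG s' s
        obtain ⟨ψ, hψ⟩ := hG v v'
        apply Finset.card_nbij' (fun φ => (χ.trans φ).trans ψ)
          (fun φ => (χ.symm.trans φ).trans ψ.symm)
        · intro φ hφ
          simp only [Finset.mem_coe, mem_filter, mem_univ, true_and, RelIso.trans_apply] at *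
          rw [hχ, hφ, hψ]
        · intro φ hφ
          simp only [Finset.mem_coe, mem_filter, mem_univ, true_and, RelIso.trans_apply] at *
          have h1 : χ.symm s = s' := by rw [← hχ, RelIso.symm_apply_apply]
          have h2 : ψ.symm v' = v := by rw [← hψ, RelIso.symm_apply_apply]
          rw [h1, hφ, h2]
        · intro φ _
          apply RelIso.ext
          intro x
          simp [RelIso.trans_apply]
        · intro φ _
          apply RelIso.ext
          intro x
          simp [RelIso.trans_apply]
      set k₀ := k a₀ a₀ with hk₀def
      have hΓ : Fintype.card (G ≃g G) = Fintype.card α * k₀ := by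
        have h1 : (univ : Finset (G ≃g G)).card =
            ∑ v : α, (univ.filter (fun φ : G ≃g G => φ a₀ = v)).card :=
          Finset.card_eq_sum_card_fiberwise (fun φ _ => mem_univ (φ a₀))
        rw [Fintype.card, h1]
        calc ∑ v : α, (univ.filter (fun φ : G ≃g G => φ a₀ = v)).card
            = ∑ _v : α, k₀ := Finset.sum_congr rfl (fun v _ => kconst a₀ v a₀ a₀)
          _ = Fintype.card α * k₀ := by
              rw [Finset.sum_const, smul_eq_mul, Finset.card_univ]
      have hfiber : ∀ v, (univ.filter (fun φ : G ≃g G => φ.symm v ∈ Sf)).card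
          = ∑ s ∈ Sf, k s v := by
        intro v
        have h1 := Finset.card_eq_sum_card_fiberwise
          (s := univ.filter (fun φ : G ≃g G => φ.symm v ∈ Sf)) (t := Sf)
          (f := fun φ => φ.symm v) (fun φ hφ => (mem_filter.mp hφ).2)
        rw [h1]
        refine Finset.sum_congr rfl fun s hs => ?_
        congr 1
        rw [Finset.filter_filter]
        apply Finset.filter_congr
        intro φ _
        constructor
        · rintro ⟨-, h2⟩
          rw [← h2, RelIso.apply_symm_apply]
        · intro h
          have h2 : φ.symm v = s := by rw [← h, RelIso.symm_apply_apply]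
          exact ⟨h2 ▸ hs, h2⟩
      have hsum : ∑ φ : G ≃g G, (Xf.filter (fun x => φ.symm x ∈ Sf)).card
          = Xf.card * (Sf.card * k₀) := by
        calc ∑ φ : G ≃g G, (Xf.filter (fun x => φ.symm x ∈ Sf)).card
            = ∑ φ : G ≃g G, ∑ x ∈ Xf, (if φ.symm x ∈ Sf then 1 else 0) := by
              refine Finset.sum_congr rfl fun φ _ => ?_
              rw [Finset.card_filter]
          _ = ∑ x ∈ Xf, ∑ φ : G ≃g G, (if φ.symm x ∈ Sf then 1 else 0) :=
              Finset.sum_comm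
          _ = ∑ x ∈ Xf, (univ.filter (fun φ : G ≃g G => φ.symm x ∈ Sf)).card := by
              refine Finset.sum_congr rfl fun x _ => ?_
              rw [Finset.card_filter]
          _ = ∑ x ∈ Xf, ∑ s ∈ Sf, k s x :=
              Finset.sum_congr rfl fun x _ => hfiber x
          _ = ∑ _x ∈ Xf, ∑ _s ∈ Sf, k₀ := by
              refine Finset.sum_congr rfl fun x _ => Finset.sum_congr rfl fun s _ => ?_
              exact kconst s x a₀ a₀
          _ = Xf.card * (Sf.card * k₀) := by
              simp [Finset.sum_const, smul_eq_mul]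
      have hAf : Af.card = A.ncard := (Set.ncard_eq_toFinset_card A hfA).symm
      have hXf : Xf.card = N.ncard := (Set.ncard_eq_toFinset_card N hfN).symm
      have hSf : Sf.card = _root_.indepNum G := by
        rw [← hScard, Set.ncard_eq_toFinset_card S hfS]
      have hlow : ∀ φ : G ≃g G,
          Af.card ≤ (Xf.filter (fun x => φ.symm x ∈ Sf)).card := by
        intro φ
        have hfilter : Xf.filter (fun x => φ.symm x ∈ Sf) = Sf.image φ ∩ Xf := by
          ext x
          simp only [Finset.mem_filter, Finset.mem_inter, Finset.mem_image]
          constructor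
          · rintro ⟨h1, h2⟩
            exact ⟨⟨_, h2, φ.apply_symm_apply x⟩, h1⟩
          · rintro ⟨⟨s, hs, rfl⟩, h1⟩
            refine ⟨h1, ?_⟩
            rwa [RelIso.symm_apply_apply]
        rw [hfilter]
        have himg_indep : _root_.IsIndepSet G (↑(Sf.image φ) : Set α) := by
          intro x hx y hy hxy
          simp only [Finset.coe_image, Set.mem_image, Finset.mem_coe] at hx hy
          obtain ⟨a, ha, rfl⟩ := hx
          obtain ⟨b, hb, rfl⟩ := hy
          have hab : a ≠ b := fun h => hxy (by rw [h])
          have ha' : a ∈ S := by rwa [hSfdef, Set.Finite.mem_toFinset] at ha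
          have hb' : b ∈ S := by rwa [hSfdef, Set.Finite.mem_toFinset] at hb
          have hnadj := (hS ha' hb' hab).2
          rw [compl_adj]
          exact ⟨hxy, fun h => hnadj (φ.map_adj_iff.mp h)⟩
        have himg_card : (↑(Sf.image φ) : Set α).ncard = _root_.indepNum G := by
          rw [Set.ncard_coe_finset, Finset.card_image_of_injective _ φ.injective, hSf]
        have hge := ncard_inter_ge hA _ himg_indep himg_card
        rw [hAf, ← Set.ncard_coe_finset (Sf.image φ ∩ Xf), Finset.coe_inter]
        have hXcoe : (↑Xf : Set α) = N := Set.Finite.coe_toFinset hfN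
        rw [hXcoe]
        exact hge
      have htotal : ∑ φ : G ≃g G, (Xf.filter (fun x => φ.symm x ∈ Sf)).card
          = ∑ _φ : G ≃g G, Af.card := by
        rw [hsum, Finset.sum_const, smul_eq_mul, Finset.card_univ, hΓ]
        calc Xf.card * (Sf.card * k₀)
            = (_root_.indepNum G * N.ncard) * k₀ := by rw [hXf, hSf]; ring
          _ = (A.ncard * Fintype.card α) * k₀ := by rw [heq]
          _ = Fintype.card α * k₀ * Af.card := by rw [hAf]; ring
      have hall : ∀ φ : G ≃g G,
          (Xf.filter (fun x => φ.symm x ∈ Sf)).card = Af.card := by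
        by_contra h
        push_neg at h
        obtain ⟨φ₀, hφ₀⟩ := h
        have hlt : ∑ _φ : G ≃g G, Af.card
            < ∑ φ : G ≃g G, (Xf.filter (fun x => φ.symm x ∈ Sf)).card :=
          Finset.sum_lt_sum (fun φ _ => hlow φ)
            ⟨φ₀, mem_univ _, lt_of_le_of_ne (hlow φ₀) (Ne.symm hφ₀)⟩
        omega
      have hrefl := hall (RelIso.refl _)
      have hreflsimp : Xf.filter (fun x => (RelIso.refl G.Adj).symm x ∈ Sf)
          = Xf ∩ Sf := by
        have hid : ∀ x : α, (RelIso.refl G.Adj).symm x = x := fun x => rfl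
        ext x
        simp [Finset.mem_filter, Finset.mem_inter, hid]
      rw [hreflsimp] at hrefl
      have hcoe : S ∩ N = ↑(Sf ∩ Xf) := by
        rw [Finset.coe_inter, Set.Finite.coe_toFinset, Set.Finite.coe_toFinset]
      rw [hcoe, Set.ncard_coe_finset, Finset.inter_comm, hrefl, hAf]
  refine ⟨part1, ?_⟩
  obtain ⟨s, hs⟩ := Gᶜ.exists_isNClique_cliqueNum
  have hS0 : _root_.IsIndepSet G (↑s : Set α) := hs.isClique
  have hS0card : (↑s : Set α).ncard = _root_.indepNum G := by
    rw [Set.ncard_coe_finset]; exact hs.card_eq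
  have hinter := part1 _ hS0 hS0card
  refine ⟨((↑s : Set α) \ closedNbhd G A) ∪ A, indepSet_union_sdiff hS0 hA, ?_,
    Set.subset_union_right⟩
  have hdisj : Disjoint ((↑s : Set α) \ closedNbhd G A) A :=
    Set.disjoint_left.mpr fun x hx hxA => hx.2 (Or.inl hxA)
  rw [Set.ncard_union_eq hdisj (Set.toFinite _) (Set.toFinite _)]
  have hsplit := Set.ncard_inter_add_ncard_diff_eq_ncard (↑s : Set α)
    (closedNbhd G A) (Set.toFinite _)
  omega
end

section
/- Let G be a finite connected vertex-transitive bipartite graph with at least one edge. Then G has no imprimitive independent set; that is, every independent set A with |A|·|V(G)| = α(G)·|N[A]| satisfies |A| = α(G). -/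
open Finset SimpleGraph

variable {α β : Type*}

section Aux

variable [Fintype α] [DecidableEq α] (G : SimpleGraph α) [DecidableRel G.Adj]

lemma aux_degree_eq (hG : VertexTransitive G) (u v : α) : G.degree u = G.degree v := by
  obtain ⟨φ, hφ⟩ := hG u v
  rw [← G.card_neighborSet_eq_degree u, ← G.card_neighborSet_eq_degree v, ← hφ]
  exact Fintype.card_congr (φ.mapNeighborSet u)

/-- open neighborhood finset -/
def NS (S : Finset α) : Finset α := S.biUnion (fun a => G.neighborFinset a)

lemma mem_NS {S : Finset α} {b : α} : b ∈ NS G S ↔ ∃ a ∈ S, G.Adj a b := by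
  simp [NS, mem_biUnion]

lemma aux_expansion {d : ℕ} (hreg : G.IsRegularOfDegree d) (hd : 0 < d)
    (S : Finset α) :
    S.card ≤ (NS G S).card ∧
      (S.card = (NS G S).card → ∀ b ∈ NS G S, G.neighborFinset b ⊆ S) := by
  have hfib : ∀ a ∈ S, ((NS G S).filter (fun b => G.Adj a b)).card = d := by
    intro a ha
    have : (NS G S).filter (fun b => G.Adj a b) = G.neighborFinset a := by
      ext x
      simp only [mem_filter, mem_NS, mem_neighborFinset]
      exact ⟨fun h => h.2, fun h => ⟨⟨a, ha, h⟩, h⟩⟩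
    rw [this]; exact hreg a
  have hsum : ∑ b ∈ NS G S, (S.filter (fun a => G.Adj a b)).card = d * S.card := by
    have : ∀ b ∈ NS G S, (S.filter (fun a => G.Adj a b)).card
        = ∑ a ∈ S, if G.Adj a b then 1 else 0 := fun b _ => Finset.card_filter _ _
    rw [Finset.sum_congr rfl this, Finset.sum_comm]
    rw [show d * S.card = ∑ a ∈ S, d by rw [Finset.sum_const, smul_eq_mul, mul_comm]]
    refine Finset.sum_congr rfl fun a ha => ?_
    rw [← Finset.card_filter]
    exact hfib a ha
  have hle : ∀ b ∈ NS G S, (S.filter (fun a => G.Adj a b)).card ≤ d := by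
    intro b _
    have hsub : S.filter (fun a => G.Adj a b) ⊆ G.neighborFinset b := by
      intro a ha
      rw [mem_neighborFinset]
      exact (Finset.mem_filter.mp ha).2.symm
    calc (S.filter (fun a => G.Adj a b)).card ≤ (G.neighborFinset b).card :=
          Finset.card_le_card hsub
      _ = d := hreg b
  constructor
  · have : d * S.card ≤ d * (NS G S).card := by
      rw [← hsum]
      calc ∑ b ∈ NS G S, (S.filter (fun a => G.Adj a b)).card
          ≤ ∑ b ∈ NS G S, d := Finset.sum_le_sum hle
        _ = d * (NS G S).card := by rw [Finset.sum_const, smul_eq_mul, mul_comm]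
    exact Nat.le_of_mul_le_mul_left this hd
  · intro hcard b hb
    have hall : (S.filter (fun a => G.Adj a b)).card = d := by
      have hsum2 : ∑ b ∈ NS G S, (S.filter (fun a => G.Adj a b)).card
          = ∑ b ∈ NS G S, d := by
        rw [hsum, Finset.sum_const, smul_eq_mul, mul_comm, ← hcard, mul_comm]
      exact (Finset.sum_eq_sum_iff_of_le hle).mp hsum2 b hb
    have hsub : S.filter (fun a => G.Adj a b) ⊆ G.neighborFinset b := by
      intro a ha
      rw [mem_neighborFinset]
      exact (Finset.mem_filter.mp ha).2.symm
    have : S.filter (fun a => G.Adj a b) = G.neighborFinset b :=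
      Finset.eq_of_subset_of_card_le hsub (by rw [hall]; exact le_of_eq (hreg b))
    intro x hx
    rw [← this] at hx
    exact (Finset.mem_filter.mp hx).1

end Aux

section Aux2
variable [Fintype α] [DecidableEq α] (G : SimpleGraph α) [DecidableRel G.Adj]

lemma aux_closure (hconn : G.Connected) {S : Finset α} (hS : S.Nonempty)
    (hclosed : ∀ b ∈ NS G S, G.neighborFinset b ⊆ S) :
    ∀ v, v ∈ S ∪ NS G S := by
  obtain ⟨a0, ha0⟩ := hS
  have key : ∀ u v : α, G.Walk u v → u ∈ S ∪ NS G S → v ∈ S ∪ NS G S := by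
    intro u v w
    induction w with
    | nil => exact id
    | cons h p ih =>
      intro hu
      apply ih
      rcases Finset.mem_union.mp hu with hu | hu
      · exact Finset.mem_union_right _ ((mem_NS G).mpr ⟨_, hu, h⟩)
      · exact Finset.mem_union_left _ (hclosed _ hu ((G.mem_neighborFinset _ _).mpr h))
  intro v
  exact key a0 v (hconn a0 v).some (Finset.mem_union_left _ ha0)

lemma aux_disjoint {S : Finset α} (hind : ∀ a ∈ S, ∀ b ∈ S, a ≠ b → ¬ G.Adj a b) :
    Disjoint S (NS G S) := by
  rw [Finset.disjoint_left]
  intro b hb hbn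
  obtain ⟨a, ha, hadj⟩ := (mem_NS G).mp hbn
  exact hind a ha b hb (G.ne_of_adj hadj) hadj

lemma aux_indep_le {d : ℕ} (hreg : G.IsRegularOfDegree d) (hd : 0 < d)
    {S : Finset α} (hind : ∀ a ∈ S, ∀ b ∈ S, a ≠ b → ¬ G.Adj a b) :
    2 * S.card ≤ Fintype.card α := by
  have h1 := (aux_expansion G hreg hd S).1
  have h2 := aux_disjoint G hind
  calc 2 * S.card = S.card + S.card := by ring
    _ ≤ S.card + (NS G S).card := by omega
    _ = (S ∪ NS G S).card := (Finset.card_union_of_disjoint h2).symm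
    _ ≤ Fintype.card α := Finset.card_le_univ _

lemma aux_indep_iff {S : Finset α} :
    Gᶜ.IsClique (↑S : Set α) ↔ ∀ a ∈ S, ∀ b ∈ S, a ≠ b → ¬ G.Adj a b := by
  constructor
  · intro h a ha b hb hab
    exact ((h ha hb hab).2)
  · intro h a ha b hb hab
    exact ⟨hab, h a ha b hb hab⟩

end Aux2

section Aux3
variable [Fintype α] [DecidableEq α] (G : SimpleGraph α) [DecidableRel G.Adj]

lemma aux_two_alpha (hbip : G.Colorable 2) {d : ℕ} (hreg : G.IsRegularOfDegree d)
    (hd : 0 < d) : Fintype.card α = 2 * Gᶜ.cliqueNum := by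
  have hone : ∀ x : Fin 2, x ≠ 0 → x = 1 := by decide
  refine le_antisymm ?_ ?_
  · obtain ⟨C⟩ := hbip
    set s0 : Finset α := Finset.univ.filter (fun a => C a = 0) with hs0
    set s1 : Finset α := Finset.univ.filter (fun a => ¬ (C a = 0)) with hs1
    have hcard : s0.card + s1.card = Fintype.card α :=
      Finset.card_filter_add_card_filter_not _
    have hind0 : Gᶜ.IsClique (↑s0 : Set α) := by
      rw [aux_indep_iff]
      intro a ha b hb hab hadj
      have h1 := (Finset.mem_filter.mp ha).2
      have h2 := (Finset.mem_filter.mp hb).2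
      exact C.valid hadj (h1.trans h2.symm)
    have hind1 : Gᶜ.IsClique (↑s1 : Set α) := by
      rw [aux_indep_iff]
      intro a ha b hb hab hadj
      have h1 := hone _ (Finset.mem_filter.mp ha).2
      have h2 := hone _ (Finset.mem_filter.mp hb).2
      exact C.valid hadj (h1.trans h2.symm)
    have hc0 : s0.card ≤ Gᶜ.cliqueNum := IsClique.card_le_cliqueNum (tc := hind0)
    have hc1 : s1.card ≤ Gᶜ.cliqueNum := IsClique.card_le_cliqueNum (tc := hind1)
    omega
  · obtain ⟨s, hs⟩ := Gᶜ.exists_isNClique_cliqueNum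
    have hind := (aux_indep_iff G).mp hs.isClique
    have h2 := aux_indep_le G hreg hd hind
    have h3 := hs.card_eq
    omega

end Aux3

theorem stmt9 [Fintype α] (G : SimpleGraph α) (hG : VertexTransitive G)
    (hconn : G.Connected) (hbip : G.Colorable 2) (hE : G.edgeSet.Nonempty)
    (A : Set α) (hA : _root_.IsIndepSet G A) (hAne : A.Nonempty)
    (heq : A.ncard * Fintype.card α = _root_.indepNum G * (closedNbhd G A).ncard) :
    A.ncard = _root_.indepNum G := by
  classical
  obtain ⟨a0, ha0⟩ := hAne
  -- regularity
  set d := G.degree a0 with hd_def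
  have hreg : G.IsRegularOfDegree d := fun v => aux_degree_eq G hG v a0
  -- positive degree
  have hd : 0 < d := by
    obtain ⟨e, he⟩ := hE
    induction e with
    | h u v =>
      rw [SimpleGraph.mem_edgeSet] at he
      have : 0 < G.degree u := (G.degree_pos_iff_exists_adj u).mpr ⟨v, he⟩
      rwa [aux_degree_eq G hG u a0] at this
  -- finset version of A
  set S := A.toFinset with hS_def
  have hScoe : (↑S : Set α) = A := Set.coe_toFinset A
  have hncardA : A.ncard = S.card := Set.ncard_eq_toFinset_card' A
  have hind : ∀ a ∈ S, ∀ b ∈ S, a ≠ b → ¬ G.Adj a b := by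
    rw [← aux_indep_iff G (S := S), hScoe]
    exact hA
  have hSne : S.Nonempty := ⟨a0, by rwa [← Finset.mem_coe, hScoe]⟩
  -- closed neighborhood
  have hcnb : closedNbhd G A = (↑(S ∪ NS G S) : Set α) := by
    ext x
    simp only [closedNbhd, Set.mem_union, Set.mem_setOf_eq, Finset.coe_union,
      Finset.mem_coe, mem_NS, ← hScoe, Finset.mem_coe]
  have hncardN : (closedNbhd G A).ncard = (S ∪ NS G S).card := by
    rw [hcnb, Set.ncard_coe_finset]
  have hdisj := aux_disjoint G hind
  have hunion : (S ∪ NS G S).card = S.card + (NS G S).card :=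
    Finset.card_union_of_disjoint hdisj
  -- independence number
  have hn2 : Fintype.card α = 2 * Gᶜ.cliqueNum := aux_two_alpha G hbip hreg hd
  have hαind : _root_.indepNum G = Gᶜ.cliqueNum := rfl
  have hSle : S.card ≤ Gᶜ.cliqueNum := by
    have : Gᶜ.IsClique (↑S : Set α) := by rw [hScoe]; exact hA
    exact IsClique.card_le_cliqueNum (tc := this)
  have hαpos : 0 < Gᶜ.cliqueNum := lt_of_lt_of_le (Finset.card_pos.mpr hSne) hSle
  -- derive |NS| = |S|
  have hexp := aux_expansion G hreg hd S
  have heq' : S.card * (2 * Gᶜ.cliqueNum)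
      = Gᶜ.cliqueNum * (S.card + (NS G S).card) := by
    rw [← hn2, ← hunion, ← hncardN, ← hncardA, ← hαind]
    exact heq
  have hNS : (NS G S).card = S.card := by nlinarith [hexp.1]
  -- equality case: closed under neighborhoods
  have hclosed := hexp.2 hNS.symm
  have huniv : ∀ v, v ∈ S ∪ NS G S := aux_closure G hconn hSne hclosed
  have hcardu : (S ∪ NS G S).card = Fintype.card α := by
    rw [← Finset.card_univ]
    congr 1
    exact Finset.eq_univ_iff_forall.mpr huniv
  rw [hncardA, hαind]
  omega
end

section
/- Let G and H be finite graphs such that the direct product G × H satisfies α(G × H) = α(H)·|V(G)|, and suppose H is disconnected with vertex set partitioned into two nonempty unions of components V₁ and V₂. If I₁ and I₂ are distinct maximum independent sets of G, then S = (I₁ × V₁) ∪ (I₂ × V₂) is a maximum independent set of G × H that is not of the form I × V(H) or V(G) × J. -/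
open Finset SimpleGraph

variable {α β : Type*}

/-- A set of vertices is independent iff it is a clique in the complement. -/
def IsIndepSet' (G : SimpleGraph α) (s : Set α) : Prop := Gᶜ.IsClique s

/-- The independence number: the clique number of the complement. -/
noncomputable def indepNum' (G : SimpleGraph α) : ℕ := Gᶜ.cliqueNum

lemma ncard_prod_aux (s : Set α) (t : Set β) : (s ×ˢ t).ncard = s.ncard * t.ncard := by
  rw [← Nat.card_coe_set_eq, ← Nat.card_coe_set_eq, ← Nat.card_coe_set_eq,
    Nat.card_congr (Equiv.Set.prod s t), Nat.card_prod]

lemma indep_noadj {G : SimpleGraph α} {s : Set α} (h : IsIndepSet' G s)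
    {a b : α} (ha : a ∈ s) (hb : b ∈ s) : ¬ G.Adj a b := by
  intro hadj
  rcases eq_or_ne a b with rfl | hne
  · exact G.irrefl hadj
  · exact ((h ha hb hne).2) hadj

theorem stmt15 [Fintype α] [Fintype β] (G : SimpleGraph α) (H : SimpleGraph β)
    (hα : indepNum' (tensorProd G H) = indepNum' G * Fintype.card β)
    (V₁ V₂ : Set β) (hunion : V₁ ∪ V₂ = Set.univ) (hdisj : Disjoint V₁ V₂)
    (h1ne : V₁.Nonempty) (h2ne : V₂.Nonempty)
    (hsep : ∀ v ∈ V₁, ∀ w ∈ V₂, ¬ H.Adj v w)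
    (I₁ I₂ : Set α) (hI₁ : IsIndepSet' G I₁) (hI₂ : IsIndepSet' G I₂)
    (hc₁ : I₁.ncard = indepNum' G) (hc₂ : I₂.ncard = indepNum' G)
    (hne : I₁ ≠ I₂) :
    IsIndepSet' (tensorProd G H) (I₁ ×ˢ V₁ ∪ I₂ ×ˢ V₂) ∧
    (I₁ ×ˢ V₁ ∪ I₂ ×ˢ V₂).ncard = indepNum' (tensorProd G H) ∧
    (¬ ∃ I : Set α, I₁ ×ˢ V₁ ∪ I₂ ×ˢ V₂ = I ×ˢ (Set.univ : Set β)) ∧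
    (¬ ∃ J : Set β, I₁ ×ˢ V₁ ∪ I₂ ×ˢ V₂ = (Set.univ : Set α) ×ˢ J) := by
  have hIpos : 0 < indepNum' G := by
    by_contra h
    have h0 : indepNum' G = 0 := Nat.eq_zero_of_not_pos h
    have e1 : I₁ = ∅ := by
      rw [← Set.ncard_eq_zero (Set.toFinite I₁)] at *; omega
    have e2 : I₂ = ∅ := by
      rw [← Set.ncard_eq_zero (Set.toFinite I₂)] at *; omega
    exact hne (e1.trans e2.symm)
  have hI₁ne : I₁.Nonempty := by
    rw [Set.nonempty_iff_ne_empty]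
    intro h
    rw [h, Set.ncard_empty] at hc₁; omega
  have hI₂ne : I₂.Nonempty := by
    rw [Set.nonempty_iff_ne_empty]
    intro h
    rw [h, Set.ncard_empty] at hc₂; omega
  refine ⟨?_, ?_, ?_, ?_⟩
  · -- independence
    intro x hx y hy hxy
    rw [SimpleGraph.compl_adj]
    refine ⟨hxy, ?_⟩
    rintro ⟨hG, hH⟩
    rcases hx with hx | hx <;> rcases hy with hy | hy
    · exact indep_noadj hI₁ hx.1 hy.1 hG
    · exact hsep x.2 hx.2 y.2 hy.2 hH
    · exact hsep y.2 hy.2 x.2 hx.2 hH.symm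
    · exact indep_noadj hI₂ hx.1 hy.1 hG
  · -- cardinality
    have hd : Disjoint (I₁ ×ˢ V₁) (I₂ ×ˢ V₂) := by
      rw [Set.disjoint_left]
      rintro x ⟨_, h1⟩ ⟨_, h2⟩
      exact Set.disjoint_left.1 hdisj h1 h2
    rw [Set.ncard_union_eq hd (Set.toFinite _) (Set.toFinite _),
      ncard_prod_aux, ncard_prod_aux, hc₁, hc₂, hα]
    have : V₁.ncard + V₂.ncard = Fintype.card β := by
      rw [← Set.ncard_union_eq hdisj (Set.toFinite _) (Set.toFinite _), hunion,
        Set.ncard_univ, Nat.card_eq_fintype_card]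
    rw [← this]; ring
  · -- not I × univ
    rintro ⟨I, hI⟩
    obtain ⟨v₁, hv₁⟩ := h1ne
    have hv₁n2 : v₁ ∉ V₂ := Set.disjoint_left.1 hdisj hv₁
    obtain ⟨v₂, hv₂⟩ := h2ne
    have hv₂n1 : v₂ ∉ V₁ := Set.disjoint_right.1 hdisj hv₂
    apply hne
    have e1 : I₁ = I := by
      ext a
      constructor
      · intro ha
        have : (a, v₁) ∈ I ×ˢ (Set.univ : Set β) := by
          rw [← hI]; exact Or.inl ⟨ha, hv₁⟩
        exact this.1
      · intro ha
        have : (a, v₁) ∈ I₁ ×ˢ V₁ ∪ I₂ ×ˢ V₂ := by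
          rw [hI]; exact ⟨ha, Set.mem_univ _⟩
        rcases this with h | h
        · exact h.1
        · exact absurd h.2 hv₁n2
    have e2 : I₂ = I := by
      ext a
      constructor
      · intro ha
        have : (a, v₂) ∈ I ×ˢ (Set.univ : Set β) := by
          rw [← hI]; exact Or.inr ⟨ha, hv₂⟩
        exact this.1
      · intro ha
        have : (a, v₂) ∈ I₁ ×ˢ V₁ ∪ I₂ ×ˢ V₂ := by
          rw [hI]; exact ⟨ha, Set.mem_univ _⟩
        rcases this with h | h
        · exact absurd h.2 hv₂n1
        · exact h.1
    rw [e1, e2]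
  · -- not univ × J
    rintro ⟨J, hJ⟩
    obtain ⟨v₁, hv₁⟩ := h1ne
    have hv₁n2 : v₁ ∉ V₂ := Set.disjoint_left.1 hdisj hv₁
    obtain ⟨v₂, hv₂⟩ := h2ne
    have hv₂n1 : v₂ ∉ V₁ := Set.disjoint_right.1 hdisj hv₂
    obtain ⟨a₁, ha₁⟩ := hI₁ne
    obtain ⟨a₂, ha₂⟩ := hI₂ne
    have hv₁J : v₁ ∈ J := by
      have : (a₁, v₁) ∈ (Set.univ : Set α) ×ˢ J := by
        rw [← hJ]; exact Or.inl ⟨ha₁, hv₁⟩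
      exact this.2
    have hv₂J : v₂ ∈ J := by
      have : (a₂, v₂) ∈ (Set.univ : Set α) ×ˢ J := by
        rw [← hJ]; exact Or.inr ⟨ha₂, hv₂⟩
      exact this.2
    apply hne
    have e1 : I₁ = Set.univ := by
      ext a
      simp only [Set.mem_univ, iff_true]
      have : (a, v₁) ∈ I₁ ×ˢ V₁ ∪ I₂ ×ˢ V₂ := by
        rw [hJ]; exact ⟨Set.mem_univ _, hv₁J⟩
      rcases this with h | h
      · exact h.1
      · exact absurd h.2 hv₁n2
    have e2 : I₂ = Set.univ := by
      ext a
      simp only [Set.mem_univ, iff_true]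
      have : (a, v₂) ∈ I₁ ×ˢ V₁ ∪ I₂ ×ˢ V₂ := by
        rw [hJ]; exact ⟨Set.mem_univ _, hv₂J⟩
      rcases this with h | h
      · exact absurd h.2 hv₂n1
      · exact h.1
    rw [e1, e2]
end
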